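/- arXiv:2307.05640 — 2 statements merged into one kernel-verified Lean document; each statement's English description precedes it below -/
import Mathlib

section
/- Let A be an almost abelian topological group and let B < A be a closed subgroup. Then rk(B) ≤ rk(A). Moreover rk(B) = rk(A) if and only if B is cocompact in A. -/
noncomputable section

/-- Virtually nilpotent group. -/
def VirtuallyNilpotent (H : Type*) [Group H] : Prop :=
  ∃ K : Subgroup H, K.FiniteIndex ∧ Group.IsNilpotent K

/-- Virtually abelian group. -/
def VirtuallyAbelian (H : Type*) [Group H] : Prop :=
  ∃ K : Subgroup H, K.FiniteIndex ∧ ∀ a ∈ K, ∀ b ∈ K, a * b = b * a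

/-- A topological group is almost nilpotent if it contains a compact open normal subgroup `N`
such that the quotient `A/N` is discrete, finitely generated and virtually nilpotent. -/
def AlmostNilpotent (A : Type*) [Group A] [TopologicalSpace A] : Prop :=
  ∃ (N : Subgroup A) (_ : N.Normal), IsOpen (N : Set A) ∧ IsCompact (N : Set A) ∧
    DiscreteTopology (A ⧸ N) ∧ Group.FG (A ⧸ N) ∧ VirtuallyNilpotent (A ⧸ N)

/-- A topological group is almost abelian if it contains a compact open normal subgroup `N`
such that the quotient `A/N` is discrete, finitely generated and virtually abelian. -/
def AlmostAbelian (A : Type*) [Group A] [TopologicalSpace A] : Prop :=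
  ∃ (N : Subgroup A) (_ : N.Normal), IsOpen (N : Set A) ∧ IsCompact (N : Set A) ∧
    DiscreteTopology (A ⧸ N) ∧ Group.FG (A ⧸ N) ∧ VirtuallyAbelian (A ⧸ N)

/-- A discrete, finitely generated, virtually abelian group has rank `k` if it contains a
finite-index free abelian subgroup isomorphic to `ℤ^k`. -/
def HasFreeAbelianRank (H : Type*) [Group H] (k : ℕ) : Prop :=
  ∃ K : Subgroup H, K.FiniteIndex ∧ Nonempty (↥K ≃* Multiplicative (Fin k → ℤ))

/-- `k` is a rank of the almost abelian group `A`, witnessed by some compact open normal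
subgroup. -/
def IsRankOf (A : Type*) [Group A] [TopologicalSpace A] (k : ℕ) : Prop :=
  ∃ (N : Subgroup A) (_ : N.Normal), IsOpen (N : Set A) ∧ IsCompact (N : Set A) ∧
    DiscreteTopology (A ⧸ N) ∧ Group.FG (A ⧸ N) ∧ HasFreeAbelianRank (A ⧸ N) k

/-- A closed subgroup `H` of a topological group `G` is cocompact if the quotient space
`G/H` is compact. -/
def CocompactIn {G : Type*} [Group G] [TopologicalSpace G] (H : Subgroup G) : Prop :=
  CompactSpace (G ⧸ H)

/-- `H` and `K` are almost commensurable: `H ∩ K` is cocompact in both `H` and `K`. -/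
def AlmostCommensurable {G : Type*} [Group G] [TopologicalSpace G] (H K : Subgroup G) : Prop :=
  CompactSpace (↥H ⧸ (H ⊓ K).subgroupOf H) ∧ CompactSpace (↥K ⧸ (H ⊓ K).subgroupOf K)

/-- `H` is almost commensurated in `G`: `H` and `gHg⁻¹` are almost commensurable for all
`g ∈ G`. -/
def AlmostCommensurated {G : Type*} [Group G] [TopologicalSpace G] (H : Subgroup G) : Prop :=
  ∀ g : G, AlmostCommensurable H (H.map (MulAut.conj g).toMonoidHom)



open Module

noncomputable section

abbrev Zmul (k : ℕ) := Multiplicative (Fin k → ℤ)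

def msub {k : ℕ} (S : Subgroup (Zmul k)) : Submodule ℤ (Fin k → ℤ) where
  carrier := (S : Set (Zmul k))
  add_mem' := fun ha hb => S.mul_mem ha hb
  zero_mem' := S.one_mem
  smul_mem' := by
    intro c x hx
    have h : (Multiplicative.ofAdd x) ^ c ∈ S := S.zpow_mem hx c
    have : Multiplicative.toAdd ((Multiplicative.ofAdd x) ^ c) = c • x := by
      simp
    rw [← this]
    exact h

lemma mem_msub {k : ℕ} (S : Subgroup (Zmul k)) (x : Fin k → ℤ) :
    x ∈ msub S ↔ Multiplicative.ofAdd x ∈ S := Iff.rfl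

def msubEquiv {k : ℕ} (S : Subgroup (Zmul k)) :
    ↥S ≃* Multiplicative ↥(msub S) where
  toFun x := Multiplicative.ofAdd ⟨Multiplicative.toAdd x.1, x.2⟩
  invFun y := ⟨Multiplicative.ofAdd ((Multiplicative.toAdd y).1), (Multiplicative.toAdd y).2⟩
  left_inv _ := rfl
  right_inv _ := rfl
  map_mul' _ _ := rfl

end
noncomputable section
open Module

def subEquivPiRank {k : ℕ} (S : Subgroup (Zmul k)) :
    ↥S ≃* Zmul (finrank ℤ ↥(msub S)) := by
  obtain ⟨n, b⟩ := Submodule.basisOfPid (Pi.basisFun ℤ (Fin k)) (msub S)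
  have hn : finrank ℤ ↥(msub S) = n := finrank_eq_card_basis b |>.trans (by simp)
  have e1 : ↥(msub S) ≃ₗ[ℤ] (Fin n → ℤ) := b.equivFun
  refine (msubEquiv S).trans ?_
  refine AddEquiv.toMultiplicative ?_
  rw [hn]
  exact e1.toAddEquiv

lemma msub_finrank_le {k : ℕ} (S : Subgroup (Zmul k)) : finrank ℤ ↥(msub S) ≤ k := by
  simpa using Submodule.finrank_le (msub S)

lemma zmul_rank_eq {k m : ℕ} (e : Zmul k ≃* Zmul m) : k = m := by
  have e' : (Fin k → ℤ) ≃+ (Fin m → ℤ) := MulEquiv.toAdditive e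
  have := e'.toIntLinearEquiv.finrank_eq
  simpa using this

lemma zmul_le_of_injective {k m : ℕ} (f : Zmul k →* Zmul m) (hf : Function.Injective f) :
    k ≤ m := by
  let f' : (Fin k → ℤ) →+ (Fin m → ℤ) :=
    { toFun := fun x => Multiplicative.toAdd (f (Multiplicative.ofAdd x))
      map_zero' := by simpa using f.map_one
      map_add' := by intro a b; simpa using f.map_mul (Multiplicative.ofAdd a) (Multiplicative.ofAdd b) }
  have hf' : Function.Injective f' := by
    intro a b h
    have : f (Multiplicative.ofAdd a) = f (Multiplicative.ofAdd b) := h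
    simpa using hf this
  have := LinearMap.finrank_le_finrank_of_injective
    (f := f'.toIntLinearMap) hf'
  simpa using this
end
noncomputable section
open Module

lemma msub_module_finite {k : ℕ} (S : Subgroup (Zmul k)) : Module.Finite ℤ ↥(msub S) :=
  Module.Finite.iff_fg.mpr (IsNoetherian.noetherian _)

lemma msub_finrank_of_finiteIndex {k : ℕ} (S : Subgroup (Zmul k)) (hS : S.FiniteIndex) :
    finrank ℤ ↥(msub S) = k := by
  haveI := msub_module_finite S
  refine le_antisymm (msub_finrank_le S) ?_
  have hc : ((S.index : ℤ)) ≠ 0 := Int.natCast_ne_zero.mpr hS.index_ne_zero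
  have hmem : ∀ i, (S.index : ℤ) • (Pi.basisFun ℤ (Fin k)) i ∈ msub S := by
    intro i
    have h := S.pow_index_mem (Multiplicative.ofAdd ((Pi.basisFun ℤ (Fin k)) i))
    rw [mem_msub]
    have : (S.index : ℤ) • (Pi.basisFun ℤ (Fin k)) i
        = S.index • (Pi.basisFun ℤ (Fin k)) i := by
      simp
    rw [this, ofAdd_nsmul]
    exact h
  have h1 : LinearIndependent ℤ (fun i => (S.index : ℤ) • (Pi.basisFun ℤ (Fin k)) i) := by
    have hinj : Function.Injective
        ((S.index : ℤ) • (LinearMap.id : (Fin k → ℤ) →ₗ[ℤ] (Fin k → ℤ))) := by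
      intro a b h
      exact smul_right_injective _ hc (by simpa using h)
    have := (Pi.basisFun ℤ (Fin k)).linearIndependent.map'
      ((S.index : ℤ) • LinearMap.id) (LinearMap.ker_eq_bot.mpr hinj)
    exact this
  have hli : LinearIndependent ℤ
      (fun i => (⟨(S.index : ℤ) • (Pi.basisFun ℤ (Fin k)) i, hmem i⟩ : ↥(msub S))) := by
    apply LinearIndependent.of_comp (msub S).subtype
    exact h1
  simpa using hli.fintype_card_le_finrank

lemma subgroup_equiv_of_finiteIndex {k : ℕ} (S : Subgroup (Zmul k)) (hS : S.FiniteIndex) :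
    Nonempty (↥S ≃* Zmul k) := by
  have e := subEquivPiRank S
  rw [msub_finrank_of_finiteIndex S hS] at e
  exact ⟨e⟩

lemma torsion_claim {k : ℕ} (S : Subgroup (Zmul k)) (hfr : finrank ℤ ↥(msub S) = k)
    (v : Fin k → ℤ) : ∃ c : ℤ, c ≠ 0 ∧ c • v ∈ msub S := by
  by_cases hv : v = 0
  · exact ⟨1, one_ne_zero, by simp [hv, (msub S).zero_mem]⟩
  by_contra hcon
  push_neg at hcon
  obtain ⟨n, b⟩ := Submodule.basisOfPid (Pi.basisFun ℤ (Fin k)) (msub S)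
  have hn : n = k := by
    rw [← hfr, finrank_eq_card_basis b, Fintype.card_fin]
  have hli : LinearIndependent ℤ (Sum.elim ((msub S).subtype ∘ b) (fun _ : Unit => v)) := by
    refine LinearIndependent.sum_type ?_ ?_ ?_
    · exact b.linearIndependent.map' (msub S).subtype (msub S).ker_subtype
    · exact linearIndependent_unique_iff.mpr hv
    · have hspan : Submodule.span ℤ (Set.range ((msub S).subtype ∘ b)) = msub S := by
        rw [Set.range_comp, Submodule.span_image, b.span_eq, Submodule.map_top,
          Submodule.range_subtype]
      rw [hspan, Set.range_const, Submodule.disjoint_def]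
      intro y hy hy2
      rw [Submodule.mem_span_singleton] at hy2
      obtain ⟨a, rfl⟩ := hy2
      rcases eq_or_ne a 0 with rfl | ha
      · simp
      · exact absurd hy (hcon a ha)
  have hcard := hli.fintype_card_le_finrank
  simp [Module.finrank_fin_fun] at hcard
  omega

lemma finiteIndex_of_equiv {k : ℕ} (S : Subgroup (Zmul k)) (e : ↥S ≃* Zmul k) :
    S.FiniteIndex := by
  have hfr : finrank ℤ ↥(msub S) = k :=
    zmul_rank_eq ((subEquivPiRank S).symm.trans e)
  haveI : Group.FG (Zmul k) :=
    AddGroup.fg_iff_mul_fg.mp (Module.Finite.iff_addGroup_fg.mp inferInstance)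
  haveI : Finite (Zmul k ⧸ S) := by
    apply CommGroup.finite_of_fg_torsion
    intro g
    induction g using QuotientGroup.induction_on with
    | _ x =>
      obtain ⟨c, hc, hmem⟩ := torsion_claim S hfr (Multiplicative.toAdd x)
      have key : ∃ m : ℕ, m ≠ 0 ∧ (m : ℤ) • (Multiplicative.toAdd x) ∈ msub S := by
        rcases lt_or_gt_of_ne hc with h | h
        · refine ⟨c.natAbs, by omega, ?_⟩
          have : ((c.natAbs : ℤ)) = -c := by omega
          rw [this, neg_smul]
          exact (msub S).neg_mem hmem
        · refine ⟨c.natAbs, by omega, ?_⟩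
          have : ((c.natAbs : ℤ)) = c := by omega
          rw [this]
          exact hmem
      obtain ⟨m, hm, hmem'⟩ := key
      rw [isOfFinOrder_iff_pow_eq_one]
      refine ⟨m, Nat.pos_of_ne_zero hm, ?_⟩
      rw [← QuotientGroup.mk_pow, QuotientGroup.eq_one_iff]
      have h2 : (m : ℤ) • Multiplicative.toAdd x = m • Multiplicative.toAdd x :=
        natCast_zsmul _ _
      rw [h2] at hmem'
      have h3 : Multiplicative.ofAdd (m • Multiplicative.toAdd x) ∈ S := hmem'
      rw [ofAdd_nsmul, ofAdd_toAdd] at h3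
      exact h3
  exact S.finiteIndex_of_finite_quotient
end
noncomputable section
open Module

def HasFreeAbelianRank' (H : Type*) [Group H] (k : ℕ) : Prop :=
  ∃ K : Subgroup H, K.FiniteIndex ∧ Nonempty (↥K ≃* Multiplicative (Fin k → ℤ))

lemma index_map_equiv {G G' : Type*} [Group G] [Group G'] (e : G ≃* G') (Q : Subgroup G) :
    (Q.map e.toMonoidHom).index = Q.index := by
  have h1 := Subgroup.index_comap_of_surjective (H := Q.map e.toMonoidHom)
    (f := e.toMonoidHom) e.surjective
  rw [Subgroup.comap_map_eq_self_of_injective e.injective] at h1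
  exact h1.symm

lemma zmul_torsionfree {k : ℕ} (x : Zmul k) (n : ℕ) (hn : n ≠ 0) (h : x ^ n = 1) : x = 1 := by
  have h' : (n : ℤ) • Multiplicative.toAdd x = 0 := by
    have : Multiplicative.toAdd (x ^ n) = n • Multiplicative.toAdd x := by simp
    rw [natCast_zsmul]
    rw [← this, h]
    rfl
  have : Multiplicative.toAdd x = 0 := by
    rcases smul_eq_zero.mp h' with h0 | h0
    · exact absurd (by exact_mod_cast h0) hn
    · exact h0
  simpa using congrArg Multiplicative.ofAdd this

lemma equiv_of_le_finiteIndex {H : Type*} [Group H] {K J : Subgroup H} (hJK : J ≤ K)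
    (hfi : (J.subgroupOf K).FiniteIndex) {k : ℕ} (eK : ↥K ≃* Zmul k) :
    Nonempty (↥J ≃* Zmul k) := by
  set Q := J.subgroupOf K
  set S := Q.map eK.toMonoidHom
  have hS : S.FiniteIndex := ⟨by rw [index_map_equiv]; exact hfi.index_ne_zero⟩
  obtain ⟨eS⟩ := subgroup_equiv_of_finiteIndex S hS
  exact ⟨(Subgroup.subgroupOfEquivOfLe hJK).symm.trans ((eK.subgroupMap Q).trans eS)⟩

lemma hfar_unique {H : Type*} [Group H] {k m : ℕ}
    (h1 : HasFreeAbelianRank' H k) (h2 : HasFreeAbelianRank' H m) : k = m := by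
  obtain ⟨K1, hK1, ⟨e1⟩⟩ := h1
  obtain ⟨K2, hK2, ⟨e2⟩⟩ := h2
  haveI := hK1; haveI := hK2
  have hfi1 : ((K1 ⊓ K2).subgroupOf K1).FiniteIndex := by
    have h : (K1 ⊓ K2).subgroupOf K1 = K2.subgroupOf K1 := by
      rw [inf_comm K1 K2]; exact Subgroup.inf_subgroupOf_right _ _
    rw [h]; infer_instance
  have hfi2 : ((K1 ⊓ K2).subgroupOf K2).FiniteIndex := by
    have h : (K1 ⊓ K2).subgroupOf K2 = K1.subgroupOf K2 := Subgroup.inf_subgroupOf_right _ _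
    rw [h]; infer_instance
  obtain ⟨f1⟩ := equiv_of_le_finiteIndex (inf_le_left : K1 ⊓ K2 ≤ K1) hfi1 e1
  obtain ⟨f2⟩ := equiv_of_le_finiteIndex (inf_le_right : K1 ⊓ K2 ≤ K2) hfi2 e2
  exact zmul_rank_eq (f1.symm.trans f2)

lemma hfar_of_surjective {G Q' : Type*} [Group G] [Group Q'] (f : G →* Q')
    (hf : Function.Surjective f) (hker : Finite f.ker) {m : ℕ}
    (h : HasFreeAbelianRank' G m) : HasFreeAbelianRank' Q' m := by
  obtain ⟨L, hL, ⟨eL⟩⟩ := h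
  set f' := f.domRestrict L
  have hinj : Function.Injective f' := by
    rw [← MonoidHom.ker_eq_bot_iff]
    rw [eq_bot_iff]
    intro x hx
    haveI : Finite ↥f'.ker := by
      have hy : ∀ y : ↥f'.ker, f ((y : ↥L) : G) = 1 := fun y => y.2
      refine Finite.of_injective
        (fun y : ↥f'.ker => (⟨((y : ↥L) : G), MonoidHom.mem_ker.mpr (hy y)⟩ : ↥f.ker)) ?_
      intro a b hab
      apply Subtype.ext
      apply Subtype.ext
      have : ((⟨((a : ↥L) : G), MonoidHom.mem_ker.mpr (hy a)⟩ : ↥f.ker) : G)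
          = ((⟨((b : ↥L) : G), MonoidHom.mem_ker.mpr (hy b)⟩ : ↥f.ker) : G) :=
        congrArg Subtype.val hab
      exact this
    -- x has finite order
    have hord : (⟨x, hx⟩ : ↥f'.ker) ^ Nat.card ↥f'.ker = 1 := pow_card_eq_one'
    have hord' : x ^ Nat.card ↥f'.ker = 1 := by
      have := congrArg Subtype.val hord
      simpa using this
    have hcard : Nat.card ↥f'.ker ≠ 0 := Nat.card_ne_zero.mpr ⟨⟨1, one_mem _⟩, inferInstance⟩
    have : eL x ^ Nat.card ↥f'.ker = 1 := by rw [← map_pow, hord', map_one]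
    have := zmul_torsionfree _ _ hcard this
    have : x = 1 := by
      apply eL.injective
      rw [this, map_one]
    simp [this]
  have hrange : f'.range = L.map f := f.restrict_range L
  have hidx : (L.map f).index ≠ 0 := by
    have h1 := Subgroup.index_comap_of_surjective (L.map f) hf
    rw [Subgroup.comap_map_eq] at h1
    have h2 := Subgroup.index_dvd_of_le (le_sup_left : L ≤ L ⊔ f.ker)
    intro h0
    rw [h0] at h1
    rw [h1] at h2
    exact hL.index_ne_zero (zero_dvd_iff.mp h2)
  refine ⟨L.map f, ⟨hidx⟩, ⟨?_⟩⟩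
  exact ((MulEquiv.subgroupCongr hrange).symm.trans
    ((MonoidHom.ofInjective hinj).symm)).trans eL
end
noncomputable section
open Module

def zmulCast {j k : ℕ} (h : j = k) : Zmul j ≃* Zmul k := by
  subst h; exact MulEquiv.refl _

lemma subgroup_rank {G : Type*} [Group G] {k : ℕ} {K : Subgroup G} (hK : K.FiniteIndex)
    (eK : ↥K ≃* Zmul k) (Hs : Subgroup G) :
    ∃ j, j ≤ k ∧ HasFreeAbelianRank' ↥Hs j ∧ (j = k ↔ Hs.FiniteIndex) := by
  haveI := hK
  set Q := (Hs ⊓ K).subgroupOf K with hQdef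
  have hQ : Q = Hs.subgroupOf K := Subgroup.inf_subgroupOf_right _ _
  set S := Q.map eK.toMonoidHom with hSdef
  set j := finrank ℤ ↥(msub S) with hjdef
  have eS : ↥S ≃* Zmul j := subEquivPiRank S
  refine ⟨j, msub_finrank_le S, ?_, ?_, ?_⟩
  · refine ⟨(Hs ⊓ K).subgroupOf Hs, ?_, ?_⟩
    · have h : (Hs ⊓ K).subgroupOf Hs = K.subgroupOf Hs := by
        rw [inf_comm Hs K]; exact Subgroup.inf_subgroupOf_right _ _
      rw [h]; infer_instance
    · exact ⟨(Subgroup.subgroupOfEquivOfLe (inf_le_left : Hs ⊓ K ≤ Hs)).trans <|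
        (Subgroup.subgroupOfEquivOfLe (inf_le_right : Hs ⊓ K ≤ K)).symm.trans <|
        (eK.subgroupMap Q).trans eS⟩
  · intro hj
    have hS : S.FiniteIndex := finiteIndex_of_equiv S (eS.trans (zmulCast hj))
    have hQne : Q.index ≠ 0 := by
      have h := index_map_equiv (Q := Q) eK
      rw [← hSdef] at h
      rw [← h]
      exact hS.index_ne_zero
    have hD : (Hs ⊓ K).index ≠ 0 := by
      rw [← Subgroup.relIndex_mul_index (inf_le_right : Hs ⊓ K ≤ K)]
      exact mul_ne_zero hQne hK.index_ne_zero
    have hdvd := Subgroup.index_dvd_of_le (inf_le_left : Hs ⊓ K ≤ Hs)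
    refine ⟨fun h0 => hD ?_⟩
    rw [h0] at hdvd
    exact zero_dvd_iff.mp hdvd
  · intro hHs
    haveI := hHs
    have hQfi : Q.FiniteIndex := by rw [hQ]; infer_instance
    have hSfi : S.FiniteIndex := ⟨by
      have h := index_map_equiv (Q := Q) eK
      rw [← hSdef] at h
      rw [h]; exact hQfi.index_ne_zero⟩
    obtain ⟨e⟩ := subgroup_equiv_of_finiteIndex S hSfi
    exact zmul_rank_eq (eS.symm.trans e)
end
noncomputable section

lemma hfar_eq_hfar' : @HasFreeAbelianRank = @HasFreeAbelianRank' := rfl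

lemma hfar_equiv {G G' : Type*} [Group G] [Group G'] (e : G ≃* G') {k : ℕ}
    (h : HasFreeAbelianRank' G k) : HasFreeAbelianRank' G' k := by
  obtain ⟨K, hKfi, ⟨eK⟩⟩ := h
  exact ⟨K.map e.toMonoidHom, ⟨by rw [index_map_equiv]; exact hKfi.index_ne_zero⟩,
    ⟨(e.subgroupMap K).symm.trans eK⟩⟩

-- finite-kernel quotient-by-compact lemma, specialized
lemma hfar_quot {B' : Type*} [Group B'] [TopologicalSpace B'] [IsTopologicalGroup B']
    (P R : Subgroup B') [P.Normal] [R.Normal] (hPR : P ≤ R)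
    (hPdisc : DiscreteTopology (B' ⧸ P)) (hRcompact : IsCompact (R : Set B'))
    {m : ℕ} (h : HasFreeAbelianRank' (B' ⧸ P) m) : HasFreeAbelianRank' (B' ⧸ R) m := by
  let ψ : B' ⧸ P →* B' ⧸ R := QuotientGroup.map P R (MonoidHom.id B') (by simpa using hPR)
  have hsurj : Function.Surjective ψ := by
    intro q
    induction q using QuotientGroup.induction_on with
    | _ x => exact ⟨QuotientGroup.mk x, rfl⟩
  have hkerset : (ψ.ker : Set (B' ⧸ P)) = QuotientGroup.mk '' (R : Set B') := by
    ext q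
    induction q using QuotientGroup.induction_on with
    | _ x =>
      simp only [SetLike.mem_coe, MonoidHom.mem_ker]
      constructor
      · intro hx
        have : ((QuotientGroup.mk x : B' ⧸ R)) = 1 := hx
        rw [QuotientGroup.eq_one_iff] at this
        exact ⟨x, this, rfl⟩
      · rintro ⟨r, hr, hrx⟩
        have : ((QuotientGroup.mk x : B' ⧸ R)) = QuotientGroup.mk r := by
          have h1 : (QuotientGroup.mk r : B' ⧸ P) = QuotientGroup.mk x := hrx
          rw [QuotientGroup.eq] at h1
          exact (QuotientGroup.eq).mpr (hPR h1) |>.symm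
        show ((QuotientGroup.mk x : B' ⧸ R)) = 1
        rw [this, QuotientGroup.eq_one_iff]
        exact hr
  have hker : Finite ψ.ker := by
    have hc : IsCompact (QuotientGroup.mk '' (R : Set B') : Set (B' ⧸ P)) :=
      hRcompact.image QuotientGroup.continuous_mk
    have hfin : (QuotientGroup.mk '' (R : Set B') : Set (B' ⧸ P)).Finite :=
      hc.finite (IsDiscrete.univ.mono (Set.subset_univ _))
    rw [← hkerset] at hfin
    exact hfin.to_subtype
  exact hfar_of_surjective ψ hsurj hker h
end
noncomputable section

open Pointwise in
lemma cocompact_iff_finiteIndex {A : Type*} [Group A] [TopologicalSpace A] [IsTopologicalGroup A]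
    (B N : Subgroup A) [N.Normal] (hNopen : IsOpen (N : Set A)) (hNcompact : IsCompact (N : Set A)) :
    CompactSpace (A ⧸ B) ↔ (B ⊔ N).FiniteIndex := by
  have hNBW : IsOpen ((B ⊔ N : Subgroup A) : Set A) := Subgroup.isOpen_mono le_sup_right hNopen
  constructor
  · intro hcs
    -- map A ⧸ B → A ⧸ (B ⊔ N)
    let g : A ⧸ B → A ⧸ (B ⊔ N) := Quotient.map' id (by
      intro x y h
      rw [QuotientGroup.leftRel_apply] at h ⊢
      exact (le_sup_left : B ≤ B ⊔ N) h)
    have hgmk : ∀ x : A, g (QuotientGroup.mk x) = QuotientGroup.mk x := fun x => rfl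
    have hgcont : Continuous g := by
      rw [(QuotientGroup.isQuotientMap_mk B).continuous_iff]
      exact QuotientGroup.continuous_mk
    have hgsurj : Function.Surjective g := by
      intro q
      induction q using QuotientGroup.induction_on with
      | _ x => exact ⟨QuotientGroup.mk x, rfl⟩
    haveI : CompactSpace (A ⧸ (B ⊔ N)) := by
      constructor
      have := (isCompact_univ (X := A ⧸ B)).image hgcont
      rwa [Set.image_univ, Set.range_eq_univ.mpr hgsurj] at this
    haveI : DiscreteTopology (A ⧸ (B ⊔ N)) := QuotientGroup.discreteTopology hNBW
    haveI : Finite (A ⧸ (B ⊔ N)) := finite_of_compact_of_discrete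
    exact (B ⊔ N).finiteIndex_of_finite_quotient
  · intro hfi
    haveI := hfi
    haveI : Finite (A ⧸ (B ⊔ N)) := (B ⊔ N).finite_quotient_of_finiteIndex
    constructor
    have hcover : (Set.univ : Set (A ⧸ B)) =
        ⋃ q : A ⧸ (B ⊔ N), QuotientGroup.mk '' ((Quotient.out q * ·) '' (N : Set A)) := by
      apply Set.eq_of_subset_of_subset ?_ (Set.subset_univ _)
      intro a _
      induction a using QuotientGroup.induction_on with
      | _ x =>
        set q : A ⧸ (B ⊔ N) := QuotientGroup.mk x with hq
        have hout : (QuotientGroup.mk (Quotient.out q) : A ⧸ (B ⊔ N)) = QuotientGroup.mk x :=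
          QuotientGroup.out_eq' q
        have hmem : (Quotient.out q)⁻¹ * x ∈ B ⊔ N := (QuotientGroup.eq).mp hout
        have hmem' : (Quotient.out q)⁻¹ * x ∈ (N : Set A) * (B : Set A) := by
          rw [← Subgroup.normal_mul N B, sup_comm N B]
          exact hmem
        obtain ⟨n, hn, b, hb, hnb⟩ := hmem'
        have hnb' : n * b = (Quotient.out q)⁻¹ * x := hnb
        refine Set.mem_iUnion.mpr ⟨q, ?_⟩
        refine ⟨Quotient.out q * n, ⟨n, hn, rfl⟩, ?_⟩
        have hx : x = (Quotient.out q * n) * b := by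
          rw [mul_assoc, hnb']
          group
        rw [hx]
        exact (QuotientGroup.mk_mul_of_mem _ hb).symm ▸ rfl
    rw [hcover]
    apply isCompact_iUnion
    intro q
    exact ((hNcompact.image (continuous_mul_left _)).image QuotientGroup.continuous_mk)
end
open Pointwise in
/-- For a closed subgroup `B` of an almost abelian group `A`: `rk(B) ≤ rk(A)`, with equality
if and only if `B` is cocompact in `A`. -/
theorem rank_le_and_eq_iff_cocompact
    (A : Type*) [Group A] [TopologicalSpace A] [IsTopologicalGroup A]
    (hA : AlmostAbelian A)
    (B : Subgroup A) (hB : IsClosed (B : Set A))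
    (kA kB : ℕ) (hkA : IsRankOf A kA) (hkB : IsRankOf (↥B) kB) :
    kB ≤ kA ∧ (kB = kA ↔ CocompactIn B) := by
  obtain ⟨N, hNnormal, hNopen, hNcompact, hNdisc, hNfg, K, hKfi, ⟨eK⟩⟩ := hkA
  obtain ⟨M, hMnormal, hMopen, hMcompact, hMdisc, hMfg, hMrank⟩ := hkB
  haveI := hNnormal; haveI := hMnormal
  let φ : ↥B →* A ⧸ N := (QuotientGroup.mk' N).comp B.subtype
  let N' : Subgroup ↥B := N.comap B.subtype
  haveI : N'.Normal := hNnormal.comap B.subtype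
  have hker : φ.ker = N' := by
    ext x
    simp only [φ, N', MonoidHom.mem_ker, MonoidHom.comp_apply, Subgroup.mem_comap,
      QuotientGroup.mk'_apply]
    rw [QuotientGroup.eq_one_iff]
  have hN'open : IsOpen (N' : Set ↥B) := hNopen.preimage continuous_subtype_val
  have hN'compact : IsCompact (N' : Set ↥B) :=
    (hB.isProperMap_subtypeVal).isCompact_preimage hNcompact
  let Hs : Subgroup (A ⧸ N) := φ.range
  obtain ⟨j, hjk, hHrank, hjiff⟩ := subgroup_rank hKfi eK Hs
  have e0 : (↥B ⧸ N') ≃* ↥Hs :=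
    (QuotientGroup.quotientMulEquivOfEq hker.symm).trans (QuotientGroup.quotientKerEquivRange φ)
  have hq1 : HasFreeAbelianRank' (↥B ⧸ N') j := hfar_equiv e0.symm hHrank
  let R : Subgroup ↥B := M ⊔ N'
  haveI : R.Normal := Subgroup.sup_normal M N'
  have hRcompact : IsCompact (R : Set ↥B) := by
    have h : (R : Set ↥B) = (M : Set ↥B) * (N' : Set ↥B) := Subgroup.mul_normal M N'
    rw [h]; exact hMcompact.mul hN'compact
  haveI : DiscreteTopology (↥B ⧸ N') := QuotientGroup.discreteTopology hN'open
  have hq2 : HasFreeAbelianRank' (↥B ⧸ R) j :=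
    hfar_quot N' R le_sup_right ‹_› hRcompact hq1
  have hq3 : HasFreeAbelianRank' (↥B ⧸ R) kB :=
    hfar_quot M R le_sup_left hMdisc hRcompact hMrank
  have hkBj : kB = j := hfar_unique hq3 hq2
  have hrange : Hs = B.map (QuotientGroup.mk' N) := by
    ext q
    constructor
    · rintro ⟨x, rfl⟩
      exact ⟨x.1, x.2, rfl⟩
    · rintro ⟨b, hb, rfl⟩
      exact ⟨⟨b, hb⟩, rfl⟩
  have hHidx : Hs.index = (B ⊔ N).index := by
    have h1 := Subgroup.index_comap_of_surjective (H := Hs) (f := QuotientGroup.mk' N)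
      (QuotientGroup.mk'_surjective N)
    have h2 : Hs.comap (QuotientGroup.mk' N) = B ⊔ N := by
      rw [hrange, Subgroup.comap_map_eq, QuotientGroup.ker_mk']
    rw [h2] at h1
    exact h1.symm
  have hfin_iff : Hs.FiniteIndex ↔ CompactSpace (A ⧸ B) := by
    rw [cocompact_iff_finiteIndex B N hNopen hNcompact]
    constructor
    · intro h
      exact ⟨by rw [← hHidx]; exact h.index_ne_zero⟩
    · intro h
      exact ⟨by rw [hHidx]; exact h.index_ne_zero⟩
  constructor
  · rw [hkBj]; exact hjk
  · show kB = kA ↔ CompactSpace (A ⧸ B)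
    rw [hkBj]
    exact hjiff.trans hfin_iff

end
end

section
/- Let P0, r0, D0, σ, R > 0. Then there exists N0 = N0(P0,r0,D0,σ,R) > 0 such that the following holds. Let (X,x,G) be a σ-controlled isometric action. Then for every point y ∈ X, the image of the restriction map Stab_G(y) → Isom(B̄(y,R)) has cardinality at most N0. -/
open Metric Set Pointwise
open scoped ENNReal

noncomputable section

/-- A unit-speed geodesic from `x` to `y`, parametrized on `[0, dist x y]`. -/
def IsGeodesicSeg {X : Type*} [MetricSpace X] (c : ℝ → X) (x y : X) : Prop :=
  c 0 = x ∧ c (dist x y) = y ∧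
    ∀ s ∈ Set.Icc (0 : ℝ) (dist x y), ∀ t ∈ Set.Icc (0 : ℝ) (dist x y),
      dist (c s) (c t) = |s - t|

/-- A geodesic metric space: any two points are joined by a geodesic. -/
def IsGeodesicSpace (X : Type*) [MetricSpace X] : Prop :=
  ∀ x y : X, ∃ c : ℝ → X, IsGeodesicSeg c x y

/-- The comparison point at arclength parameter `s` on the Euclidean segment from `a` to `b`. -/
def cmpPoint (a b : EuclideanSpace ℝ (Fin 2)) (s : ℝ) : EuclideanSpace ℝ (Fin 2) :=
  a + (s / dist a b) • (b - a)

/-- A CAT(0)-space: a geodesic space in which every geodesic triangle is thinner than its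
Euclidean comparison triangle. -/
def IsCAT0 (X : Type*) [MetricSpace X] : Prop :=
  IsGeodesicSpace X ∧
    ∀ (x y z : X) (c₁ c₂ : ℝ → X), IsGeodesicSeg c₁ x y → IsGeodesicSeg c₂ x z →
      ∀ x' y' z' : EuclideanSpace ℝ (Fin 2),
        dist x' y' = dist x y → dist x' z' = dist x z → dist y' z' = dist y z →
          ∀ s ∈ Set.Icc (0 : ℝ) (dist x y), ∀ t ∈ Set.Icc (0 : ℝ) (dist x z),
            dist (c₁ s) (c₂ t) ≤ dist (cmpPoint x' y' s) (cmpPoint x' z' t)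

/-- Geodesically complete: every geodesic segment extends to a (full) geodesic line. -/
def GeodesicallyComplete (X : Type*) [MetricSpace X] : Prop :=
  ∀ (a b : ℝ) (c : ℝ → X),
    (∀ s ∈ Set.Icc a b, ∀ t ∈ Set.Icc a b, dist (c s) (c t) = |s - t|) →
    ∃ l : ℝ → X, Isometry l ∧ ∀ s ∈ Set.Icc a b, l s = c s

/-- `(P₀, r₀)`-packed: every `2r₀`-separated subset of a closed ball of radius `3r₀`
has at most `P₀` elements. -/
def IsPacked (P₀ r₀ : ℝ) (X : Type*) [MetricSpace X] : Prop :=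
  ∀ (x : X) (s : Finset X), ↑s ⊆ Metric.closedBall x (3 * r₀) →
    (∀ y ∈ s, ∀ z ∈ s, y ≠ z → 2 * r₀ < dist y z) → (s.card : ℝ) ≤ P₀

/-- The compact-open topology on the isometry group of a metric space. -/
instance isomTopology (X : Type*) [MetricSpace X] : TopologicalSpace (X ≃ᵢ X) :=
  TopologicalSpace.induced
    (fun g : X ≃ᵢ X => (⟨(g : X → X), g.continuous⟩ : C(X, X))) inferInstance

/-- `G` is `D`-cocompact: `G ⬝ B̄(x, D) = X` for every `x`. -/
def IsDCocompact {X : Type*} [MetricSpace X] (G : Subgroup (X ≃ᵢ X)) (D : ℝ) : Prop :=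
  ∀ x y : X, ∃ g ∈ G, dist x (g y) ≤ D

/-- The quotient metric space `G \ X` has diameter at most `D`:
the infimum `inf_{g ∈ G} d(x, g y)` is `≤ D` for all `x, y`. -/
def QuotDiamLE {X : Type*} [MetricSpace X] (G : Subgroup (X ≃ᵢ X)) (D : ℝ) : Prop :=
  ∀ x y : X, ∀ ε > 0, ∃ g ∈ G, dist x (g y) < D + ε

/-- `G` is cocompact: the quotient `G \ X` is compact; equivalently there is a compact set
whose `G`-translates cover `X`. -/
def IsCocompactAction {X : Type*} [MetricSpace X] (G : Subgroup (X ≃ᵢ X)) : Prop :=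
  ∃ K : Set X, IsCompact K ∧ ∀ x : X, ∃ g ∈ G, (g : X ≃ᵢ X) x ∈ K

/-- A topological group is unimodular if it admits a left and right invariant Haar measure,
i.e. a Borel measure, positive on open sets and finite on compact sets, invariant under all
left and right translations. -/
def IsUnimodularGroup (G : Type*) [Group G] [TopologicalSpace G] : Prop :=
  ∃ μ : @MeasureTheory.Measure G (borel G),
    (∀ K : Set G, IsCompact K → μ K ≠ ⊤) ∧
    (∀ U : Set G, IsOpen U → U.Nonempty → 0 < μ U) ∧
    (∀ (g : G) (A : Set G), μ ((fun h => g * h) '' A) = μ A) ∧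
    (∀ (g : G) (A : Set G), μ ((fun h => h * g) '' A) = μ A)

/-- An isometry is elliptic if it has a fixed point (equivalently, the displacement infimum
is attained and equals `0`). -/
def IsEllipticIso {X : Type*} [MetricSpace X] (g : X ≃ᵢ X) : Prop :=
  ∃ x : X, g x = x

/-- Translation length of an isometry. -/
def translationLength {X : Type*} [MetricSpace X] (g : X ≃ᵢ X) : ℝ :=
  ⨅ x : X, dist x (g x)

/-- An isometry is semisimple if its displacement infimum is attained
(it is then elliptic or hyperbolic). -/
def IsSemisimpleIso {X : Type*} [MetricSpace X] (g : X ≃ᵢ X) : Prop :=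
  ∃ x : X, dist x (g x) = translationLength g

/-- The free systole of `G` at `x`: infimum of displacements at `x` of non-elliptic
elements of `G` (`⊤` if there are none). -/
def freeSystoleAt {X : Type*} [MetricSpace X] (G : Subgroup (X ≃ᵢ X)) (x : X) : ℝ≥0∞ :=
  ⨅ g ∈ {g : X ≃ᵢ X | g ∈ G ∧ ¬ IsEllipticIso g}, edist x (g x)

/-- The free systole of `G`. -/
def freeSystole {X : Type*} [MetricSpace X] (G : Subgroup (X ≃ᵢ X)) : ℝ≥0∞ :=
  ⨅ x : X, freeSystoleAt G x

/-- The free diastole of `G`. -/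
def freeDiastole {X : Type*} [MetricSpace X] (G : Subgroup (X ≃ᵢ X)) : ℝ≥0∞ :=
  ⨆ x : X, freeSystoleAt G x

/-- The open almost stabilizer `G_r(x) = ⟨S_r(x)⟩`. -/
def openAlmostStab {X : Type*} [MetricSpace X] (G : Subgroup (X ≃ᵢ X)) (x : X) (r : ℝ) :
    Subgroup (X ≃ᵢ X) :=
  Subgroup.closure {g : X ≃ᵢ X | g ∈ G ∧ dist x (g x) < r}

/-- The closed almost stabilizer `Ḡ_r(x) = ⟨S̄_r(x)⟩`. -/
def closedAlmostStab {X : Type*} [MetricSpace X] (G : Subgroup (X ≃ᵢ X)) (x : X) (r : ℝ) :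
    Subgroup (X ≃ᵢ X) :=
  Subgroup.closure {g : X ≃ᵢ X | g ∈ G ∧ dist x (g x) ≤ r}

end

/-- A `σ`-controlled isometric action (with structural constants `P₀, r₀, D₀`). -/
def SigmaControlled (P₀ r₀ D₀ σ : ℝ) (X : Type*) [MetricSpace X] (x : X)
    (G : Subgroup (X ≃ᵢ X)) : Prop :=
  ProperSpace X ∧ GeodesicallyComplete X ∧ IsCAT0 X ∧ IsPacked P₀ r₀ X ∧
    IsClosed (G : Set (X ≃ᵢ X)) ∧ IsTotallyDisconnected (G : Set (X ≃ᵢ X)) ∧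
    IsDCocompact G D₀ ∧
    ∀ g ∈ G, dist x (g x) = 0 ∨ σ ≤ dist x (g x)

noncomputable section

lemma exists_cmp_triangle (a b c : ℝ) (ha : 0 ≤ a) (hb : 0 ≤ b)
    (h1 : c ≤ a + b) (h2 : b ≤ a + c) (h3 : a ≤ b + c) :
    ∃ x' y' z' : EuclideanSpace ℝ (Fin 2), dist x' y' = a ∧ dist x' z' = b ∧ dist y' z' = c := by
  have hc : 0 ≤ c := by nlinarith
  have keydist : ∀ (u v : ℝ), dist ((WithLp.equiv 2 (Fin 2 → ℝ)).symm ![u, 0])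
      ((WithLp.equiv 2 (Fin 2 → ℝ)).symm ![v, (0:ℝ)]) = |u - v| := by
    intro u v
    rw [EuclideanSpace.dist_eq]
    simp [Fin.sum_univ_two, WithLp.equiv_symm_apply, PiLp.toLp_apply, Real.dist_eq, sq_abs]
    rw [Real.sqrt_sq_eq_abs]
  rcases eq_or_lt_of_le ha with rfl | hapos
  · -- a = 0, then b = c
    have hbc : b = c := le_antisymm (by linarith) (by linarith)
    refine ⟨(WithLp.equiv 2 (Fin 2 → ℝ)).symm ![0, 0], (WithLp.equiv 2 (Fin 2 → ℝ)).symm ![0, 0],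
      (WithLp.equiv 2 (Fin 2 → ℝ)).symm ![b, 0], ?_, ?_, ?_⟩
    · simp [keydist]
    · rw [keydist]; simp [abs_of_nonneg hb]
    · rw [keydist]; rw [hbc]; simp [abs_of_nonneg hc]
  · set p : ℝ := (a^2 + b^2 - c^2)/(2*a) with hp
    have hq2 : p^2 ≤ b^2 := by
      have key : (a^2+b^2-c^2)^2 ≤ (2*a*b)^2 := by
        nlinarith [mul_nonneg (mul_nonneg (mul_nonneg (by linarith : (0:ℝ) ≤ a + b - c)
          (by linarith : (0:ℝ) ≤ a + b + c)) (by linarith : (0:ℝ) ≤ c - a + b))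
          (by linarith : (0:ℝ) ≤ c + a - b)]
      have h2a : (0:ℝ) < 4*a^2 := by positivity
      rw [hp, div_pow]
      rw [div_le_iff₀ (by positivity)]
      calc (a^2+b^2-c^2)^2 ≤ (2*a*b)^2 := key
        _ = b^2 * (2*a)^2 := by ring
    set q : ℝ := Real.sqrt (b^2 - p^2) with hqdef
    have hqsq : q^2 = b^2 - p^2 := Real.sq_sqrt (by linarith)
    refine ⟨(WithLp.equiv 2 (Fin 2 → ℝ)).symm ![0, 0], (WithLp.equiv 2 (Fin 2 → ℝ)).symm ![a, 0],
      (WithLp.equiv 2 (Fin 2 → ℝ)).symm ![p, q], ?_, ?_, ?_⟩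
    · rw [keydist]; simp [abs_of_nonneg ha]
    · rw [EuclideanSpace.dist_eq]
      simp only [Fin.sum_univ_two, WithLp.equiv_symm_apply, PiLp.toLp_apply]
      simp only [Matrix.cons_val_zero, Matrix.cons_val_one, Matrix.head_cons, Real.dist_eq, sq_abs]
      have : (0 - p)^2 + (0 - q)^2 = b^2 := by
        rw [show (0 - p)^2 + (0 - q)^2 = p^2 + q^2 by ring, hqsq]; ring
      rw [this, Real.sqrt_sq hb]
    · rw [EuclideanSpace.dist_eq]
      simp only [Fin.sum_univ_two, WithLp.equiv_symm_apply, PiLp.toLp_apply]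
      simp only [Matrix.cons_val_zero, Matrix.cons_val_one, Matrix.head_cons, Real.dist_eq, sq_abs]
      have hap : 2 * a * p = a^2 + b^2 - c^2 := by
        rw [hp]; field_simp
      have : (a - p)^2 + (0 - q)^2 = c^2 := by
        have : (a-p)^2 + (0-q)^2 = a^2 - 2*a*p + p^2 + q^2 := by ring
        rw [this, hqsq, hap]; ring
      rw [this, Real.sqrt_sq hc]

variable {X : Type*} [MetricSpace X]

lemma cmpPoint_scale {x' y' : EuclideanSpace ℝ (Fin 2)} {d l : ℝ} (hd : dist x' y' = d) :
    cmpPoint x' y' (l * d) = x' + l • (y' - x') := by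
  rcases eq_or_ne d 0 with rfl | hne
  · have hxy : y' = x' := (dist_eq_zero.1 hd).symm
    simp [cmpPoint, hxy]
  · rw [cmpPoint, hd, mul_div_assoc, div_self hne, mul_one]

/-- Key CAT(0) contraction inequality. -/
lemma cat0_contract (hC : IsCAT0 X) {x y z : X} {c₁ c₂ : ℝ → X}
    (h₁ : IsGeodesicSeg c₁ x y) (h₂ : IsGeodesicSeg c₂ x z) {l : ℝ}
    (hl0 : 0 ≤ l) (hl1 : l ≤ 1) :
    dist (c₁ (l * dist x y)) (c₂ (l * dist x z)) ≤ l * dist y z := by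
  obtain ⟨x', y', z', e1, e2, e3⟩ := exists_cmp_triangle (dist x y) (dist x z) (dist y z)
    dist_nonneg dist_nonneg
    (by rw [dist_comm y z]; exact (dist_triangle z x y).trans (by rw [dist_comm z x]; exact le_of_eq (add_comm _ _)))
    (dist_triangle x y z)
    ((dist_triangle x z y).trans (by rw [dist_comm z y]))
  have hs : l * dist x y ∈ Set.Icc (0:ℝ) (dist x y) :=
    ⟨mul_nonneg hl0 dist_nonneg, by nlinarith [dist_nonneg (x := x) (y := y)]⟩
  have ht : l * dist x z ∈ Set.Icc (0:ℝ) (dist x z) :=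
    ⟨mul_nonneg hl0 dist_nonneg, by nlinarith [dist_nonneg (x := x) (y := z)]⟩
  have key := hC.2 x y z c₁ c₂ h₁ h₂ x' y' z' e1 e2 e3 _ hs _ ht
  refine key.trans (le_of_eq ?_)
  rw [cmpPoint_scale e1, cmpPoint_scale e2]
  rw [dist_eq_norm]
  have harith : x' + l • (y' - x') - (x' + l • (z' - x')) = l • (y' - z') := by
    rw [smul_sub, smul_sub, smul_sub]; abel
  rw [harith, norm_smul, Real.norm_eq_abs, abs_of_nonneg hl0, ← dist_eq_norm, e3]

lemma geodesic_unique (hC : IsCAT0 X) {x y : X} {c c' : ℝ → X}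
    (hc : IsGeodesicSeg c x y) (hc' : IsGeodesicSeg c' x y) :
    ∀ s ∈ Set.Icc (0:ℝ) (dist x y), c s = c' s := by
  intro s hs
  rcases eq_or_lt_of_le (dist_nonneg (x := x) (y := y)) with hd | hd
  · have hs0 : s = 0 := le_antisymm (by rw [← hd] at hs; exact hs.2) hs.1
    rw [hs0, hc.1, hc'.1]
  · have hl0 : 0 ≤ s / dist x y := div_nonneg hs.1 (le_of_lt hd)
    have hl1 : s / dist x y ≤ 1 := (div_le_one hd).2 hs.2
    have key := cat0_contract hC hc hc' hl0 hl1
    rw [div_mul_cancel₀ _ (ne_of_gt hd), dist_self, mul_zero] at key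
    exact dist_le_zero.1 key

/-- Canonical midpoint. -/
def midp (hC : IsCAT0 X) (x y : X) : X := (hC.1 x y).choose (dist x y / 2)

lemma half_mem_Icc {d : ℝ} (hd : 0 ≤ d) : d / 2 ∈ Set.Icc (0:ℝ) d :=
  ⟨by linarith, by linarith⟩

lemma midp_eq (hC : IsCAT0 X) {x y : X} {c : ℝ → X} (hc : IsGeodesicSeg c x y) :
    c (dist x y / 2) = midp hC x y :=
  geodesic_unique hC hc (hC.1 x y).choose_spec _ (half_mem_Icc dist_nonneg)

lemma midp_comm (hC : IsCAT0 X) (x y : X) : midp hC x y = midp hC y x := by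
  obtain ⟨c, hc⟩ := hC.1 y x
  have h1 : c (dist y x / 2) = midp hC y x := midp_eq hC hc
  have hdyx : dist y x = dist x y := dist_comm y x
  have hrev : IsGeodesicSeg (fun t => c (dist x y - t)) x y := by
    refine ⟨?_, ?_, ?_⟩
    · show c (dist x y - 0) = x
      rw [sub_zero, ← hdyx]; exact hc.2.1
    · show c (dist x y - dist x y) = y
      rw [sub_self]; exact hc.1
    · intro s hs t ht
      have key := hc.2.2 (dist x y - s)
        ⟨by linarith [hs.2], by rw [hdyx]; linarith [hs.1]⟩
        (dist x y - t)
        ⟨by linarith [ht.2], by rw [hdyx]; linarith [ht.1]⟩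
      rw [key, abs_sub_comm]
      congr 1; ring
  have h2 : (fun t => c (dist x y - t)) (dist x y / 2) = midp hC x y := midp_eq hC hrev
  simp only at h2
  rw [← h2, ← h1, hdyx]
  congr 1; ring

lemma midp_map (hC : IsCAT0 X) (u : X ≃ᵢ X) (x y : X) :
    u (midp hC x y) = midp hC (u x) (u y) := by
  obtain ⟨c, hc⟩ := hC.1 x y
  have hd : dist (u x) (u y) = dist x y := u.dist_eq x y
  have hcu : IsGeodesicSeg (fun t => u (c t)) (u x) (u y) := by
    refine ⟨?_, ?_, ?_⟩
    · show u (c 0) = u x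
      rw [hc.1]
    · show u (c (dist (u x) (u y))) = u y
      rw [hd, hc.2.1]
    · intro s hs t ht
      rw [hd] at hs ht
      show dist (u (c s)) (u (c t)) = |s - t|
      rw [u.dist_eq]
      exact hc.2.2 s hs t ht
  have h1 : c (dist x y / 2) = midp hC x y := midp_eq hC hc
  have h2 : (fun t => u (c t)) (dist (u x) (u y) / 2) = midp hC (u x) (u y) := midp_eq hC hcu
  simp only at h2
  rw [← h2, hd, ← h1]

lemma midp_line (hC : IsCAT0 X) {l : ℝ → X} (hl : Isometry l) {a b : ℝ} (hab : a ≤ b) :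
    midp hC (l a) (l b) = l ((a + b) / 2) := by
  have hd : dist (l a) (l b) = b - a := by
    rw [hl.dist_eq, Real.dist_eq, abs_of_nonpos (by linarith)]; ring
  have hseg : IsGeodesicSeg (fun t => l (a + t)) (l a) (l b) := by
    refine ⟨?_, ?_, ?_⟩
    · show l (a + 0) = l a
      rw [add_zero]
    · show l (a + dist (l a) (l b)) = l b
      rw [hd]; congr 1; ring
    · intro s _ t _
      show dist (l (a + s)) (l (a + t)) = |s - t|
      rw [hl.dist_eq, Real.dist_eq]
      congr 1; ring
  have key := midp_eq hC hseg
  rw [← key, hd]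
  congr 1; ring

lemma midp_contract (hC : IsCAT0 X) (a b b' : X) :
    dist (midp hC a b) (midp hC a b') ≤ dist b b' / 2 := by
  obtain ⟨c₁, hc₁⟩ := hC.1 a b
  obtain ⟨c₂, hc₂⟩ := hC.1 a b'
  have key := cat0_contract hC hc₁ hc₂ (l := 1/2) (by norm_num) (by norm_num)
  calc dist (midp hC a b) (midp hC a b')
      = dist (c₁ (1/2 * dist a b)) (c₂ (1/2 * dist a b')) := by
        rw [show (1:ℝ)/2 * dist a b = dist a b / 2 by ring,
          show (1:ℝ)/2 * dist a b' = dist a b' / 2 by ring,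
          midp_eq hC hc₁, midp_eq hC hc₂]
    _ ≤ 1/2 * dist b b' := key
    _ = dist b b' / 2 := by ring

lemma midp_contract₂ (hC : IsCAT0 X) (a b a' b' : X) :
    dist (midp hC a b) (midp hC a' b') ≤ (dist a a' + dist b b') / 2 := by
  have t1 : dist (midp hC a b) (midp hC a b') ≤ dist b b' / 2 := midp_contract hC a b b'
  have t2 : dist (midp hC a b') (midp hC a' b') ≤ dist a a' / 2 := by
    rw [midp_comm hC a b', midp_comm hC a' b']
    exact midp_contract hC b' a a'
  calc dist (midp hC a b) (midp hC a' b')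
      ≤ dist (midp hC a b) (midp hC a b') + dist (midp hC a b') (midp hC a' b') :=
        dist_triangle _ _ _
    _ ≤ dist b b' / 2 + dist a a' / 2 := add_le_add t1 t2
    _ = (dist a a' + dist b b') / 2 := by ring


/-- Rigidity: an isometry whose fixed-point set is `D`-dense in a ball fixes a smaller ball. -/
lemma fix_dense (hC : IsCAT0 X) (hGC : GeodesicallyComplete X) (u : X ≃ᵢ X) (y : X)
    (D R : ℝ) (hD : 0 < D)
    (hdense : ∀ w : X, dist y w ≤ R + 3 * D → ∃ p : X, u p = p ∧ dist w p ≤ D)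
    {z : X} (hz : dist y z ≤ R) : u z = z := by
  classical
  set C : Set X := {w : X | u w = w} with hCdef
  have hCcl : IsClosed C := isClosed_eq u.continuous continuous_id
  have hCmid : ∀ a ∈ C, ∀ b ∈ C, midp hC a b ∈ C := by
    intro a ha b hb
    show u (midp hC a b) = midp hC a b
    rw [midp_map hC u a b, ha, hb]
  obtain ⟨p₀, hp₀fix, hp₀d⟩ := hdense z (by linarith)
  have hp₀C : p₀ ∈ C := hp₀fix
  have hCne : C.Nonempty := ⟨p₀, hp₀C⟩
  set d : ℝ := Metric.infDist z C with hddef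
  have hdD : d ≤ D := (Metric.infDist_le_dist_of_mem hp₀C).trans hp₀d
  have hd0 : d = 0 := by
    by_contra hdne
    have hdpos : 0 < d := lt_of_le_of_ne Metric.infDist_nonneg (Ne.symm hdne)
    have hlt : Metric.infDist z C < d + d / 10 := by linarith
    obtain ⟨π, hπC, hπd⟩ := (Metric.infDist_lt_iff hCne).1 hlt
    set d₂ : ℝ := dist π z with hd₂def
    have hd₂pos : d ≤ d₂ := by
      rw [hd₂def, dist_comm]; exact Metric.infDist_le_dist_of_mem hπC
    have hd₂lt : d₂ < d + d / 10 := by rw [hd₂def, dist_comm]; exact hπd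
    obtain ⟨c, hc⟩ := hC.1 π z
    obtain ⟨l, hl, hlc⟩ := hGC 0 (dist π z) c hc.2.2
    have hl0 : l 0 = π := by
      rw [hlc 0 ⟨le_refl 0, dist_nonneg⟩, hc.1]
    have hld₂ : l d₂ = z := by
      rw [hd₂def]
      rw [hlc (dist π z) ⟨dist_nonneg, le_refl _⟩, hc.2.1]
    set φ : ℝ → ℝ := fun t => Metric.infDist (l t) C with hφdef
    have hφ0 : φ 0 = 0 := by
      rw [hφdef]; simp only [hl0]
      exact Metric.infDist_zero_of_mem hπC
    have hφd₂ : φ d₂ = d := by rw [hφdef]; simp only [hld₂, hddef]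
    -- midpoint/doubling inequality
    have hdouble : ∀ s : ℝ, 0 ≤ s → 2 * φ s ≤ φ (2 * s) := by
      intro s hs
      have key : ∀ ε : ℝ, 0 < ε → φ s ≤ φ (2 * s) / 2 + ε := by
        intro ε hε
        obtain ⟨a, haC, had⟩ := (Metric.infDist_lt_iff hCne).1
          (show φ 0 < 0 + ε by rw [hφ0]; linarith)
        obtain ⟨b, hbC, hbd⟩ := (Metric.infDist_lt_iff hCne).1
          (show φ (2 * s) < φ (2 * s) + ε by linarith)
        have hmidC : midp hC a b ∈ C := hCmid a haC b hbC
        have hls : l s = midp hC (l 0) (l (2 * s)) := by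
          rw [midp_line hC hl (by linarith : (0:ℝ) ≤ 2 * s)]
          congr 1; ring
        have est : dist (l s) (midp hC a b) ≤ (dist (l 0) a + dist (l (2*s)) b) / 2 := by
          rw [hls]; exact midp_contract₂ hC (l 0) (l (2*s)) a b
        have : φ s ≤ dist (l s) (midp hC a b) := Metric.infDist_le_dist_of_mem hmidC
        calc φ s ≤ (dist (l 0) a + dist (l (2*s)) b) / 2 := le_trans this est
          _ ≤ ((0 + ε) + (φ (2*s) + ε)) / 2 := by
              have := add_le_add (le_of_lt had) (le_of_lt hbd)
              linarith
          _ = φ (2*s) / 2 + ε := by ring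
      have : φ s ≤ φ (2 * s) / 2 := le_of_forall_pos_le_add key
      linarith
    have hgrow : ∀ k : ℕ, 2 ^ k * d ≤ φ (2 ^ k * d₂) := by
      intro k
      induction k with
      | zero => simpa [hφd₂] using le_of_eq rfl
      | succ n ih =>
        have h1 : 2 * φ (2 ^ n * d₂) ≤ φ (2 * (2 ^ n * d₂)) :=
          hdouble _ (by positivity)
        calc 2 ^ (n+1) * d = 2 * (2 ^ n * d) := by ring
          _ ≤ 2 * φ (2 ^ n * d₂) := by linarith [ih]
          _ ≤ φ (2 * (2 ^ n * d₂)) := h1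
          _ = φ (2 ^ (n+1) * d₂) := by ring_nf
    -- choose k
    have hd₂pos' : 0 < d₂ := lt_of_lt_of_le hdpos hd₂pos
    have hex : ∃ k : ℕ, 3 / 2 * D < 2 ^ k * d₂ := by
      obtain ⟨n, hn⟩ := pow_unbounded_of_one_lt (3 / 2 * D / d₂) (by norm_num : (1:ℝ) < 2)
      exact ⟨n, by rw [div_lt_iff₀ hd₂pos'] at hn; linarith [hn]⟩
    obtain ⟨k, hk, hkmin⟩ : ∃ k : ℕ, (3 / 2 * D < 2 ^ k * d₂) ∧
        ∀ j < k, ¬ (3 / 2 * D < 2 ^ j * d₂) :=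
      ⟨Nat.find hex, Nat.find_spec hex, fun j hj => Nat.find_min hex hj⟩
    have hkpos : k ≠ 0 := by
      intro h0
      rw [h0] at hk
      simp only [pow_zero, one_mul] at hk
      nlinarith
    have hk3D : 2 ^ k * d₂ ≤ 3 * D := by
      obtain ⟨k', rfl⟩ := Nat.exists_eq_succ_of_ne_zero hkpos
      have hnot : ¬ (3 / 2 * D < 2 ^ k' * d₂) := hkmin k' (Nat.lt_succ_self k')
      push_neg at hnot
      calc 2 ^ (k' + 1) * d₂ = 2 * (2 ^ k' * d₂) := by ring
        _ ≤ 2 * (3 / 2 * D) := by linarith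
        _ = 3 * D := by ring
    -- the point w
    have h2k1 : (1:ℝ) ≤ 2 ^ k := by apply one_le_pow₀ (by norm_num : (1:ℝ) ≤ 2)
    have hw : dist y (l (2 ^ k * d₂)) ≤ R + 3 * D := by
      have hzw : dist z (l (2 ^ k * d₂)) = 2 ^ k * d₂ - d₂ := by
        rw [← hld₂, hl.dist_eq, Real.dist_eq, abs_of_nonpos]
        · ring
        · nlinarith
      calc dist y (l (2 ^ k * d₂)) ≤ dist y z + dist z (l (2 ^ k * d₂)) := dist_triangle _ _ _
        _ = dist y z + (2 ^ k * d₂ - d₂) := by rw [hzw]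
        _ ≤ R + (3 * D - d₂) := by linarith [hk3D]
        _ ≤ R + 3 * D := by linarith [le_of_lt hd₂pos']
    obtain ⟨pw, hpwfix, hpwd⟩ := hdense (l (2 ^ k * d₂)) hw
    have hpwC : pw ∈ C := hpwfix
    have hφle : φ (2 ^ k * d₂) ≤ D :=
      (Metric.infDist_le_dist_of_mem hpwC).trans hpwd
    have hφge : 2 ^ k * d ≤ φ (2 ^ k * d₂) := hgrow k
    -- contradiction: 2^k d₂ < (11/10) 2^k d ≤ 1.1 D < 1.5 D < 2^k d₂
    have h1 : 2 ^ k * d₂ < 2 ^ k * (d + d / 10) := by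
      apply mul_lt_mul_of_pos_left hd₂lt (by positivity)
    have h2 : 2 ^ k * (d + d / 10) = (11/10) * (2 ^ k * d) := by ring
    have h3 : 2 ^ k * d ≤ D := le_trans hφge hφle
    nlinarith
  -- conclude z ∈ C
  have : z ∈ C := (hCcl.mem_iff_infDist_zero hCne).2 hd0
  exact this


/-- Packing propagates to smaller scales in geodesically complete CAT(0) spaces. -/
lemma packed_small {P₀ r₀ : ℝ} (hC : IsCAT0 X) (hGC : GeodesicallyComplete X)
    (hP : IsPacked P₀ r₀ X) (hr₀ : 0 < r₀) {ρ : ℝ} (hρ : 0 < ρ) (hρle : ρ ≤ r₀) :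
    IsPacked P₀ ρ X := by
  classical
  intro z s hs hsep
  -- expansion map
  have hexp : ∀ w : X, ∃ e : X, dist z e = (r₀ / ρ) * dist z w ∧
      ∃ cl : ℝ → X, IsGeodesicSeg cl z e ∧ cl (dist z w) = w := by
    intro w
    obtain ⟨c, hc⟩ := hC.1 z w
    obtain ⟨l, hl, hlc⟩ := hGC 0 (dist z w) c hc.2.2
    set T : ℝ := (r₀ / ρ) * dist z w with hT
    have hT0 : 0 ≤ T := mul_nonneg (le_of_lt (div_pos hr₀ hρ)) dist_nonneg
    have hl0 : l 0 = z := by rw [hlc 0 ⟨le_refl 0, dist_nonneg⟩, hc.1]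
    have hdze : dist z (l T) = T := by
      rw [← hl0, hl.dist_eq, Real.dist_eq, abs_of_nonpos (by linarith)]
      ring
    refine ⟨l T, hdze, l, ⟨hl0, by rw [hdze], ?_⟩, ?_⟩
    · intro s₁ _ t₁ _
      rw [hl.dist_eq, Real.dist_eq]
    · rw [hlc (dist z w) ⟨dist_nonneg, le_refl _⟩, hc.2.1]
  choose e he hgeod using hexp
  have hlam0 : (0:ℝ) ≤ ρ / r₀ := le_of_lt (div_pos hρ hr₀)
  have hlam1 : ρ / r₀ ≤ 1 := (div_le_one hr₀).2 hρle
  have hcontr : ∀ w v : X, dist w v ≤ (ρ / r₀) * dist (e w) (e v) := by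
    intro w v
    obtain ⟨cw, hcw, hcwev⟩ := hgeod w
    obtain ⟨cv, hcv, hcvev⟩ := hgeod v
    have key := cat0_contract hC hcw hcv hlam0 hlam1
    have hw' : (ρ / r₀) * dist z (e w) = dist z w := by
      rw [he w]; field_simp
    have hv' : (ρ / r₀) * dist z (e v) = dist z v := by
      rw [he v]; field_simp
    rw [hw', hv', hcwev, hcvev] at key
    exact key
  set t : Finset X := s.image e with ht
  have hinj : Set.InjOn e ↑s := by
    intro w hw v hv hwv
    by_contra hne
    have h1 : 2 * ρ < dist w v := hsep w hw v hv hne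
    have h2 : dist w v ≤ (ρ / r₀) * dist (e w) (e v) := hcontr w v
    rw [hwv, dist_self, mul_zero] at h2
    linarith
  have hcard : t.card = s.card := Finset.card_image_of_injOn hinj
  have htsub : ↑t ⊆ Metric.closedBall z (3 * r₀) := by
    intro w hw
    simp only [ht, Finset.coe_image, Set.mem_image, Finset.mem_coe] at hw
    obtain ⟨v, hv, rfl⟩ := hw
    have hv3 : dist z v ≤ 3 * ρ := by
      have := hs hv
      rw [Metric.mem_closedBall] at this
      rw [dist_comm]; exact this
    rw [Metric.mem_closedBall, dist_comm, he v]
    calc (r₀ / ρ) * dist z v ≤ (r₀ / ρ) * (3 * ρ) := by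
          apply mul_le_mul_of_nonneg_left hv3 (le_of_lt (div_pos hr₀ hρ))
      _ = 3 * r₀ := by field_simp
  have htsep : ∀ a ∈ t, ∀ b ∈ t, a ≠ b → 2 * r₀ < dist a b := by
    intro a ha b hb hab
    simp only [ht, Finset.mem_image] at ha hb
    obtain ⟨w, hw, rfl⟩ := ha
    obtain ⟨v, hv, rfl⟩ := hb
    have hne : w ≠ v := fun h => hab (by rw [h])
    have h1 : 2 * ρ < dist w v := hsep w hw v hv hne
    have h2 := hcontr w v
    by_contra hle
    push_neg at hle
    have : dist w v ≤ (ρ / r₀) * (2 * r₀) :=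
      h2.trans (mul_le_mul_of_nonneg_left hle hlam0)
    rw [show (ρ / r₀) * (2 * r₀) = 2 * ρ by field_simp] at this
    linarith
  have := hP z t htsub htsep
  rw [hcard] at this
  exact this

/-- A maximal `2ρ`-separated net in a ball of radius `3ρ`. -/
lemma max_net {P₀ ρ : ℝ} (hP : IsPacked P₀ ρ X) (hρ : 0 < ρ) (c : X) :
    ∃ A : Finset X, (A.card : ℝ) ≤ P₀ ∧ ↑A ⊆ Metric.closedBall c (3 * ρ) ∧
      ∀ w ∈ Metric.closedBall c (3 * ρ), ∃ a ∈ A, dist a w ≤ 2 * ρ := by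
  classical
  set Q : ℕ → Prop := fun n => ∃ A : Finset X, ↑A ⊆ Metric.closedBall c (3 * ρ) ∧
    (∀ a ∈ A, ∀ b ∈ A, a ≠ b → 2 * ρ < dist a b) ∧ A.card = n with hQ
  have hQ0 : Q 0 := ⟨∅, by simp, by simp, by simp⟩
  have hQbound : ∀ n, Q n → (n : ℝ) ≤ P₀ := by
    rintro n ⟨A, h1, h2, h3⟩
    rw [← h3]; exact hP c A h1 h2
  have hQboundN : ∀ n, Q n → n ≤ Nat.floor (max P₀ 0) := by
    intro n hn
    apply Nat.le_floor
    exact le_trans (hQbound n hn) (le_max_left _ _)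
  set B : ℕ := Nat.floor (max P₀ 0) with hB
  have hQmax : Q (Nat.findGreatest Q B) := Nat.findGreatest_spec (Nat.zero_le B) hQ0
  obtain ⟨A, hA1, hA2, hA3⟩ := hQmax
  refine ⟨A, hQbound _ ⟨A, hA1, hA2, rfl⟩, hA1, ?_⟩
  intro w hw
  by_contra hnone
  push_neg at hnone
  have hwA : w ∉ A := by
    intro hwa
    have h := hnone w hwa
    rw [dist_self] at h
    linarith
  have hQsucc : Q (A.card + 1) := by
    refine ⟨insert w A, ?_, ?_, ?_⟩
    · intro a ha
      simp only [Finset.coe_insert, Set.mem_insert_iff] at ha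
      rcases ha with rfl | ha
      · exact hw
      · exact hA1 ha
    · intro a ha b hb hab
      simp only [Finset.mem_insert] at ha hb
      rcases ha with rfl | ha
      · rcases hb with rfl | hb
        · exact absurd rfl hab
        · exact lt_of_lt_of_le (hnone b hb) (le_of_eq (dist_comm b a))
      · rcases hb with rfl | hb
        · exact hnone a ha
        · exact hA2 a ha b hb hab
    · rw [Finset.card_insert_of_notMem hwA]
  have hle : A.card + 1 ≤ B := hQboundN _ hQsucc
  have := Nat.findGreatest_is_greatest (P := Q)
    (show Nat.findGreatest Q B < A.card + 1 by rw [hA3]; exact Nat.lt_succ_self _) hle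
  exact this hQsucc

/-- Iterated covering of balls by small balls. -/
lemma cover_lemma {P₀ ρ : ℝ} (hC : IsCAT0 X) (hP : IsPacked P₀ ρ X) (hρ : 0 < ρ)
    (y : X) : ∀ m : ℕ, ∃ N : Finset X, N.card ≤ (Nat.floor (max P₀ 0)) ^ m ∧
      ∀ w : X, dist y w ≤ m * ρ → ∃ a ∈ N, dist a w ≤ 2 * ρ := by
  classical
  intro m
  induction m with
  | zero =>
    refine ⟨{y}, by simp, ?_⟩
    intro w hw
    simp only [Nat.cast_zero, zero_mul] at hw
    have : dist y w = 0 := le_antisymm hw dist_nonneg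
    exact ⟨y, Finset.mem_singleton_self y, by rw [this]; positivity⟩
  | succ n ih =>
    obtain ⟨N, hNcard, hNcover⟩ := ih
    choose A hA1 hA2 hA3 using fun c : X => max_net hP hρ c
    refine ⟨N.biUnion A, ?_, ?_⟩
    · calc (N.biUnion A).card ≤ ∑ c ∈ N, (A c).card := Finset.card_biUnion_le
        _ ≤ ∑ _c ∈ N, Nat.floor (max P₀ 0) := by
            apply Finset.sum_le_sum
            intro c _
            apply Nat.le_floor
            exact le_trans (hA1 c) (le_max_left _ _)
        _ = N.card * Nat.floor (max P₀ 0) := by rw [Finset.sum_const, smul_eq_mul]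
        _ ≤ (Nat.floor (max P₀ 0)) ^ n * Nat.floor (max P₀ 0) :=
            Nat.mul_le_mul_right _ hNcard
        _ = (Nat.floor (max P₀ 0)) ^ (n + 1) := by ring
    · intro w hw
      -- find z' with dist y z' ≤ n ρ and dist z' w ≤ ρ
      have hz' : ∃ z' : X, dist y z' ≤ n * ρ ∧ dist z' w ≤ ρ := by
        by_cases hcase : dist y w ≤ n * ρ
        · exact ⟨w, hcase, by simp [hρ.le]⟩
        · push_neg at hcase
          obtain ⟨c, hc⟩ := hC.1 y w
          have hmem : (n : ℝ) * ρ ∈ Set.Icc (0:ℝ) (dist y w) :=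
            ⟨by positivity, le_of_lt hcase⟩
          refine ⟨c ((n:ℝ) * ρ), ?_, ?_⟩
          · have h0 := hc.2.2 0 ⟨le_refl 0, dist_nonneg⟩ ((n:ℝ)*ρ) hmem
            rw [hc.1] at h0
            rw [h0, zero_sub, abs_neg, abs_of_nonneg (by positivity : (0:ℝ) ≤ (n:ℝ)*ρ)]
          · have h1 := hc.2.2 ((n:ℝ)*ρ) hmem (dist y w) ⟨dist_nonneg, le_refl _⟩
            rw [hc.2.1] at h1
            rw [h1, abs_of_nonpos (by linarith [hcase.le])]
            push_cast at hw
            linarith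
      obtain ⟨z', hz'1, hz'2⟩ := hz'
      obtain ⟨a, haN, haz'⟩ := hNcover z' hz'1
      have hwball : w ∈ Metric.closedBall a (3 * ρ) := by
        rw [Metric.mem_closedBall, dist_comm]
        calc dist a w ≤ dist a z' + dist z' w := dist_triangle _ _ _
          _ ≤ 2 * ρ + ρ := add_le_add haz' hz'2
          _ = 3 * ρ := by ring
      obtain ⟨b, hbA, hbw⟩ := hA3 a w hwball
      exact ⟨b, Finset.mem_biUnion.2 ⟨a, haN, hbA⟩, hbw⟩


/-- Cardinality bound for separated sets in balls. -/
lemma sep_card_bound {P₀ ρ σ' : ℝ} (hC : IsCAT0 X) (hP : IsPacked P₀ ρ X) (hρ : 0 < ρ)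
    (hsep4 : 4 * ρ < σ') (y : X) (m : ℕ) (s : Finset X)
    (hs : ∀ p ∈ s, dist y p ≤ m * ρ)
    (hsepa : ∀ p ∈ s, ∀ q ∈ s, p ≠ q → σ' ≤ dist p q) :
    s.card ≤ (Nat.floor (max P₀ 0)) ^ m := by
  classical
  obtain ⟨N, hNcard, hNcover⟩ := cover_lemma hC hP hρ y m
  have hchoice : ∀ p ∈ s, ∃ a ∈ N, dist a p ≤ 2 * ρ := fun p hp => hNcover p (hs p hp)
  choose f hfN hfd using hchoice
  have hinj : ∀ p (hp : p ∈ s), ∀ q (hq : q ∈ s), f p hp = f q hq → p = q := by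
    intro p hp q hq hfpq
    by_contra hne
    have h1 : σ' ≤ dist p q := hsepa p hp q hq hne
    have h2 : dist p q ≤ dist p (f p hp) + dist (f q hq) q := by
      rw [hfpq]
      exact dist_triangle _ _ _
    have h3 : dist p (f p hp) ≤ 2 * ρ := by rw [dist_comm]; exact hfd p hp
    have h4 : dist (f q hq) q ≤ 2 * ρ := hfd q hq
    linarith
  have hcard : s.card ≤ N.card := by
    apply Finset.card_le_card_of_injOn (fun p => if hp : p ∈ s then f p hp else y)
    · intro p hp
      simp only [dif_pos hp]
      rw [dif_pos (show p ∈ s from hp)]; exact hfN p _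
    · intro p hp q hq hpq
      simp only [Finset.mem_coe] at hp hq
      simp only [dif_pos hp, dif_pos hq] at hpq
      exact hinj p hp q hq hpq
  exact hcard.trans hNcard

end

/-- Uniform bound on the cardinality of the image of the restriction map
`Stab_G(y) → Isom(B̄(y,R))` for `σ`-controlled actions: there are at most `N₀` isometries
of `G` fixing `y`, up to agreement on the ball `B̄(y,R)`. -/
theorem stabilizer_restriction_bound_sigma_controlled
    (P₀ r₀ D₀ σ R : ℝ) (hP₀ : 0 < P₀) (hr₀ : 0 < r₀) (hD₀ : 0 < D₀) (hσ : 0 < σ)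
    (hR : 0 < R) :
    ∃ N₀ : ℕ, 0 < N₀ ∧
      ∀ (X : Type*) [MetricSpace X] (x : X) (G : Subgroup (X ≃ᵢ X)),
        SigmaControlled P₀ r₀ D₀ σ X x G →
        ∀ y : X, ∃ T : Finset (X ≃ᵢ X), T.card ≤ N₀ ∧
          ∀ g : X ≃ᵢ X, g ∈ G → g y = y →
            ∃ h ∈ T, ∀ z ∈ Metric.closedBall y R, g z = h z := by
  classical
  set ρ : ℝ := min (σ / 5) r₀ with hρdef
  have hρpos : 0 < ρ := lt_min (by positivity) hr₀
  have hρle : ρ ≤ r₀ := min_le_right _ _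
  have h4ρ : 4 * ρ < σ := by
    have : ρ ≤ σ / 5 := min_le_left _ _
    linarith
  set R' : ℝ := R + 4 * D₀ with hR'def
  set m : ℕ := Nat.ceil (R' / ρ) with hmdef
  set B : ℕ := Nat.floor (max P₀ 0) with hBdef
  set M : ℕ := B ^ m with hMdef
  refine ⟨M ^ M + 1, Nat.succ_pos _, ?_⟩
  intro X _ x G hSC y
  obtain ⟨hProp, hGC, hC, hPack, hclosed, htd, hcoc, hgap⟩ := hSC
  have hP' : IsPacked P₀ ρ X := packed_small hC hGC hPack hr₀ hρpos hρle
  -- the finite net F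
  set F : Set X := {p : X | (∃ g : X ≃ᵢ X, g ∈ G ∧ g x = p) ∧ dist y p ≤ R'} with hFdef
  have hFsep : ∀ p ∈ F, ∀ q ∈ F, p ≠ q → σ ≤ dist p q := by
    rintro p ⟨⟨g₁, hg₁, rfl⟩, -⟩ q ⟨⟨g₂, hg₂, rfl⟩, -⟩ hne
    have hmem : g₁⁻¹ * g₂ ∈ G := mul_mem (inv_mem hg₁) hg₂
    have happ : (g₁⁻¹ * g₂) x = g₁⁻¹ (g₂ x) := rfl
    have hdist : dist x ((g₁⁻¹ * g₂) x) = dist (g₁ x) (g₂ x) := by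
      rw [happ]
      have h1 : g₁⁻¹ (g₁ x) = x := by
        have : (g₁⁻¹ * g₁) x = x := by rw [inv_mul_cancel]; rfl
        exact this
      calc dist x (g₁⁻¹ (g₂ x)) = dist (g₁⁻¹ (g₁ x)) (g₁⁻¹ (g₂ x)) := by rw [h1]
        _ = dist (g₁ x) (g₂ x) := (g₁⁻¹ : X ≃ᵢ X).dist_eq _ _
    rcases hgap (g₁⁻¹ * g₂) hmem with h0 | hσ'
    · exfalso
      rw [hdist] at h0
      exact hne (dist_eq_zero.1 h0)
    · rw [hdist] at hσ'
      exact hσ'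
  have hFbound : ∀ t : Finset X, ↑t ⊆ F → t.card ≤ M := by
    intro t ht
    apply sep_card_bound hC hP' hρpos h4ρ y m t
    · intro p hp
      have hmem := ht hp
      have hle : dist y p ≤ R' := hmem.2
      have : R' ≤ m * ρ := by
        rw [hmdef]
        rw [← div_le_iff₀ hρpos] at *
        exact Nat.le_ceil _
      linarith
    · intro p hp q hq hne
      exact hFsep p (ht hp) q (ht hq) hne
  have hFfin : F.Finite := by
    by_contra hinf
    obtain ⟨t, htsub, htcard⟩ := Set.Infinite.exists_subset_card_eq hinf (M + 1)
    have := hFbound t htsub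
    omega
  set Fs : Finset X := hFfin.toFinset with hFsdef
  have hFs_mem : ∀ p : X, p ∈ Fs ↔ p ∈ F := fun p => Set.Finite.mem_toFinset hFfin
  have hFscard : Fs.card ≤ M := hFbound Fs (by intro p hp; exact (hFs_mem p).1 hp)
  have hmaps : ∀ g : X ≃ᵢ X, g ∈ G → g y = y → ∀ p : X, p ∈ Fs → g p ∈ Fs := by
    intro g hg hgy p hp
    rw [hFs_mem] at hp ⊢
    obtain ⟨⟨g', hg', hg'x⟩, hpd⟩ := hp
    constructor
    · exact ⟨g * g', mul_mem hg hg', by rw [← hg'x]; rfl⟩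
    · have : dist y (g p) = dist (g y) (g p) := by rw [hgy]
      rw [this, g.dist_eq]
      exact hpd
  -- the finite coding map
  set Φ : (X ≃ᵢ X) → (↥Fs → ↥Fs) := fun g p =>
    if h : g (↑p) ∈ Fs then ⟨g ↑p, h⟩ else p with hΦdef
  set pred : (↥Fs → ↥Fs) → Prop := fun f => ∃ g : X ≃ᵢ X, g ∈ G ∧ g y = y ∧ Φ g = f
    with hpreddef
  set T₀ : Finset (↥Fs → ↥Fs) := Finset.univ.filter pred with hT₀def
  set sel : (↥Fs → ↥Fs) → (X ≃ᵢ X) := fun f => if h : pred f then h.choose else 1 with hseldef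
  refine ⟨T₀.image sel, ?_, ?_⟩
  · calc (T₀.image sel).card ≤ T₀.card := Finset.card_image_le
      _ ≤ (Finset.univ : Finset (↥Fs → ↥Fs)).card := Finset.card_filter_le _ _
      _ = Fintype.card (↥Fs → ↥Fs) := rfl
      _ = Fs.card ^ Fs.card := by rw [Fintype.card_fun, Fintype.card_coe]
      _ ≤ M ^ M := by
          rcases Nat.eq_zero_or_pos M with hM0 | hMpos
          · have : Fs.card = 0 := by omega
            rw [this, hM0]
          · calc Fs.card ^ Fs.card ≤ M ^ Fs.card := Nat.pow_le_pow_left hFscard _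
              _ ≤ M ^ M := Nat.pow_le_pow_right hMpos hFscard
      _ ≤ M ^ M + 1 := Nat.le_succ _
  · intro g hg hgy
    have hf : pred (Φ g) := ⟨g, hg, hgy, rfl⟩
    have hfT₀ : Φ g ∈ T₀ := Finset.mem_filter.2 ⟨Finset.mem_univ _, hf⟩
    set h : X ≃ᵢ X := hf.choose with hhdef
    obtain ⟨hhG, hhy, hhΦ⟩ := hf.choose_spec
    have hselT : h ∈ T₀.image sel := by
      apply Finset.mem_image.2 ⟨Φ g, hfT₀, ?_⟩
      exact dif_pos hf
    refine ⟨h, hselT, ?_⟩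
    have hagree : ∀ p : X, p ∈ Fs → g p = h p := by
      intro p hp
      have heq := congrFun hhΦ ⟨p, hp⟩
      have e1 : Φ h ⟨p, hp⟩ = ⟨h p, hmaps h hhG hhy p hp⟩ := dif_pos (hmaps h hhG hhy p hp)
      have e2 : Φ g ⟨p, hp⟩ = ⟨g p, hmaps g hg hgy p hp⟩ := dif_pos (hmaps g hg hgy p hp)
      rw [e1, e2] at heq
      exact (congrArg Subtype.val heq).symm
    set u : X ≃ᵢ X := g.trans h.symm with hudef
    have hu : ∀ w : X, u w = h.symm (g w) := fun w => rfl
    have hdense : ∀ w : X, dist y w ≤ R + 3 * D₀ → ∃ p : X, u p = p ∧ dist w p ≤ D₀ := by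
      intro w hw
      obtain ⟨g', hg'G, hg'd⟩ := hcoc w x
      refine ⟨g' x, ?_, hg'd⟩
      have hpF : g' x ∈ Fs := by
        rw [hFs_mem]
        refine ⟨⟨g', hg'G, rfl⟩, ?_⟩
        calc dist y (g' x) ≤ dist y w + dist w (g' x) := dist_triangle _ _ _
          _ ≤ (R + 3 * D₀) + D₀ := add_le_add hw hg'd
          _ = R' := by rw [hR'def]; ring
      rw [hu, hagree _ hpF]
      exact h.symm_apply_apply _
    intro z hz
    have hzy : dist y z ≤ R := by
      rw [Metric.mem_closedBall] at hz
      rw [dist_comm]; exact hz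
    have huz : u z = z := fix_dense hC hGC u y D₀ R hD₀ ?_ hzy
    · rw [hu] at huz
      have := congrArg h huz
      rw [h.apply_symm_apply] at this
      exact this
    · exact hdense
end
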